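/- Double-integral identity for the minimum of a nonincreasing kernel (Appendix IV, equation (39)): Let n ≥ 1 be an integer, R > 0, and let φ : ℝ → ℝ be nonnegative, nonincreasing, and integrable on [0, R] against r^{2n−1}. Then ∫_0^R ∫_0^R r_1^{n−1} r_2^{n−1} min(φ(r_1), φ(r_2)) dr_1 dr_2 = (2/n) ∫_0^R r^{2n−1} φ(r) dr. -/

import Mathlib

open MeasureTheory intervalIntegral Set

lemma aux_min_identity
    (n : ℕ) (hn : 1 ≤ n) (R : ℝ) (hR : 0 < R)
    (ψ : ℝ → ℝ) (hψ0 : ∀ r, 0 ≤ ψ r) (hanti : Antitone ψ) :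
    (∫ r₁ in (0:ℝ)..R, ∫ r₂ in (0:ℝ)..R,
        r₁ ^ (n - 1) * r₂ ^ (n - 1) * min (ψ r₁) (ψ r₂))
      = (2 / (n : ℝ)) * ∫ r in (0:ℝ)..R, r ^ (2 * n - 1) * ψ r := by
  have hn0 : (n : ℝ) ≠ 0 := Nat.cast_ne_zero.mpr (by omega)
  have hmeas : Measurable ψ := hanti.measurable
  have hpow : ∀ x : ℝ, x ^ (n - 1) * x ^ n = x ^ (2 * n - 1) := by
    intro x; rw [← pow_add]; congr 1; omega
  set g : ℝ → ℝ := fun r => r ^ (n - 1) * ψ r with hg_def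
  have hg_int : ∀ a b : ℝ, IntervalIntegrable g volume a b := fun a b =>
    ((hanti.antitoneOn _).intervalIntegrable).continuousOn_mul
      (continuous_pow _).continuousOn
  set W : ℝ → ℝ := fun x => ∫ t in (0:ℝ)..x, g t with hW_def
  have hWcont : Continuous W := continuous_primitive hg_int 0
  have hJint : IntervalIntegrable (fun r => r ^ (2 * n - 1) * ψ r) volume 0 R :=
    ((hanti.antitoneOn _).intervalIntegrable).continuousOn_mul
      (continuous_pow _).continuousOn
  have hpowint : ∀ r₁ : ℝ, 0 ≤ r₁ →
      (∫ r₂ in (0:ℝ)..r₁, r₂ ^ (n - 1)) = r₁ ^ n / n := by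
    intro r₁ _
    rw [integral_pow]
    have h1 : n - 1 + 1 = n := by omega
    have hc : ((n - 1 : ℕ) : ℝ) + 1 = n := by
      rw [Nat.cast_sub hn]; push_cast; ring
    rw [h1, hc]
    have : (0:ℝ) ^ n = 0 := zero_pow (by omega)
    rw [this]; ring
  -- inner integral
  have inner_eq : ∀ r₁ ∈ Icc (0:ℝ) R,
      (∫ r₂ in (0:ℝ)..R, r₁ ^ (n - 1) * r₂ ^ (n - 1) * min (ψ r₁) (ψ r₂))
        = r₁ ^ (2 * n - 1) * ψ r₁ / n + r₁ ^ (n - 1) * (W R - W r₁) := by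
    intro r₁ hr₁
    have hmin_anti : Antitone (fun r₂ => min (ψ r₁) (ψ r₂)) :=
      fun a b hab => min_le_min le_rfl (hanti hab)
    have hmin_int : ∀ a b : ℝ,
        IntervalIntegrable (fun r₂ => r₂ ^ (n - 1) * min (ψ r₁) (ψ r₂)) volume a b :=
      fun a b => ((hmin_anti.antitoneOn _).intervalIntegrable).continuousOn_mul
        (continuous_pow _).continuousOn
    have hsplit :
        (∫ r₂ in (0:ℝ)..r₁, r₂ ^ (n - 1) * min (ψ r₁) (ψ r₂))
          + (∫ r₂ in r₁..R, r₂ ^ (n - 1) * min (ψ r₁) (ψ r₂))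
        = ∫ r₂ in (0:ℝ)..R, r₂ ^ (n - 1) * min (ψ r₁) (ψ r₂) :=
      integral_add_adjacent_intervals (hmin_int 0 r₁) (hmin_int r₁ R)
    have hfirst : (∫ r₂ in (0:ℝ)..r₁, r₂ ^ (n - 1) * min (ψ r₁) (ψ r₂))
        = r₁ ^ n / n * ψ r₁ := by
      have : (∫ r₂ in (0:ℝ)..r₁, r₂ ^ (n - 1) * min (ψ r₁) (ψ r₂))
          = ∫ r₂ in (0:ℝ)..r₁, r₂ ^ (n - 1) * ψ r₁ := by
        apply integral_congr
        intro r₂ hr₂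
        rw [uIcc_of_le hr₁.1] at hr₂
        have : ψ r₁ ≤ ψ r₂ := hanti hr₂.2
        simp [min_eq_left this]
      rw [this, intervalIntegral.integral_mul_const, hpowint r₁ hr₁.1]
    have hsecond : (∫ r₂ in r₁..R, r₂ ^ (n - 1) * min (ψ r₁) (ψ r₂))
        = W R - W r₁ := by
      have h1 : (∫ r₂ in r₁..R, r₂ ^ (n - 1) * min (ψ r₁) (ψ r₂))
          = ∫ r₂ in r₁..R, g r₂ := by
        apply integral_congr
        intro r₂ hr₂
        rw [uIcc_of_le hr₁.2] at hr₂
        have : ψ r₂ ≤ ψ r₁ := hanti hr₂.1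
        simp only [g, min_eq_right this]
      rw [h1, hW_def]
      exact (integral_interval_sub_left (hg_int 0 R) (hg_int 0 r₁)).symm
    have hconst : (∫ r₂ in (0:ℝ)..R, r₁ ^ (n - 1) * r₂ ^ (n - 1) * min (ψ r₁) (ψ r₂))
        = r₁ ^ (n - 1) * ∫ r₂ in (0:ℝ)..R, r₂ ^ (n - 1) * min (ψ r₁) (ψ r₂) := by
      rw [← intervalIntegral.integral_const_mul]
      apply integral_congr
      intro r₂ _
      ring
    rw [hconst, ← hsplit, hfirst, hsecond]
    have : r₁ ^ (n - 1) * (r₁ ^ n / n * ψ r₁) = r₁ ^ (2 * n - 1) * ψ r₁ / n := by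
      rw [← hpow r₁]; ring
    ring_nf
    ring_nf at this
    linarith [this]
  -- outer integral
  set s : Set ℝ := {x | ¬ContinuousAt ψ x} with hs_def
  have hs : s.Countable := hanti.countable_not_continuousAt
  have hgmeas : Measurable g := (measurable_id.pow_const _).mul hmeas
  set H : ℝ → ℝ := fun x => x ^ n / n * (W R - W x) with hH_def
  have hb_cont : Continuous (fun r : ℝ => r ^ (n - 1) * (W R - W r)) :=
    (continuous_pow _).mul (continuous_const.sub hWcont)
  have hc_int : IntervalIntegrable (fun x : ℝ => x ^ n / n * g x) volume 0 R :=
    (hg_int 0 R).continuousOn_mul ((continuous_pow n).div_const _).continuousOn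
  have key : (∫ x in (0:ℝ)..R,
      (x ^ (n - 1) * (W R - W x) - x ^ n / n * g x)) = H R - H 0 := by
    apply integral_eq_of_hasDerivAt_off_countable_of_le H
      (fun x => x ^ (n - 1) * (W R - W x) - x ^ n / n * g x) hR.le hs
    · exact (((continuous_pow n).div_const _).mul (continuous_const.sub hWcont)).continuousOn
    · intro x hx
      have hψc : ContinuousAt ψ x := not_not.mp hx.2
      have hgc : ContinuousAt g x :=
        ((continuous_pow (n - 1)).continuousAt).mul hψc
      have hW' : HasDerivAt W (g x) x :=
        integral_hasDerivAt_right (hg_int 0 x)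
          (hgmeas.stronglyMeasurable.stronglyMeasurableAtFilter) hgc
      have hu : HasDerivAt (fun y : ℝ => y ^ n / n) (x ^ (n - 1)) x := by
        have h := (hasDerivAt_pow n x).div_const (n : ℝ)
        refine h.congr_deriv ?_
        field_simp
      have hv : HasDerivAt (fun y => W R - W y) (-(g x)) x := hW'.const_sub (W R)
      have := hu.mul hv
      refine this.congr_deriv ?_
      ring
    · exact (hb_cont.intervalIntegrable 0 R).sub hc_int
  have hH0 : H R - H 0 = 0 := by
    simp [hH_def, zero_pow (show n ≠ 0 by omega)]
  have hBA : (∫ x in (0:ℝ)..R, x ^ (n - 1) * (W R - W x))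
      = ∫ x in (0:ℝ)..R, x ^ n / n * g x := by
    have hsub := intervalIntegral.integral_sub (hb_cont.intervalIntegrable 0 R) hc_int
    rw [hH0] at key
    have : (∫ x in (0:ℝ)..R, x ^ (n - 1) * (W R - W x))
        - (∫ x in (0:ℝ)..R, x ^ n / n * g x) = 0 := by
      rw [← hsub]; exact key
    linarith [this]
  have hgJ : (∫ x in (0:ℝ)..R, x ^ n / n * g x)
      = (∫ r in (0:ℝ)..R, r ^ (2 * n - 1) * ψ r) / n := by
    rw [← intervalIntegral.integral_div]
    apply integral_congr
    intro x _
    simp only [g]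
    rw [← hpow x]
    ring
  calc (∫ r₁ in (0:ℝ)..R, ∫ r₂ in (0:ℝ)..R,
        r₁ ^ (n - 1) * r₂ ^ (n - 1) * min (ψ r₁) (ψ r₂))
      = ∫ r₁ in (0:ℝ)..R,
          (r₁ ^ (2 * n - 1) * ψ r₁ / n + r₁ ^ (n - 1) * (W R - W r₁)) := by
        apply integral_congr
        intro r hr
        rw [uIcc_of_le hR.le] at hr
        exact inner_eq r hr
    _ = (∫ r in (0:ℝ)..R, r ^ (2 * n - 1) * ψ r) / n
          + ∫ r in (0:ℝ)..R, r ^ (n - 1) * (W R - W r) := by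
        rw [intervalIntegral.integral_add (hJint.div_const _) (hb_cont.intervalIntegrable 0 R), intervalIntegral.integral_div]
    _ = (2 / (n : ℝ)) * ∫ r in (0:ℝ)..R, r ^ (2 * n - 1) * ψ r := by
        rw [hBA, hgJ]; ring


/-- double-integral identity for the minimum of a
nonincreasing kernel (Appendix IV, equation (39)). -/
theorem double_integral_min_identity
    (n : ℕ) (hn : 1 ≤ n) (R : ℝ) (hR : 0 < R)
    (φ : ℝ → ℝ)
    (hφ0 : ∀ r ∈ Set.Icc (0 : ℝ) R, 0 ≤ φ r)
    (hanti : AntitoneOn φ (Set.Icc (0 : ℝ) R))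
    (hint : IntervalIntegrable (fun r => r ^ (2 * n - 1) * φ r) volume 0 R) :
    (∫ r₁ in (0:ℝ)..R, ∫ r₂ in (0:ℝ)..R,
        r₁ ^ (n - 1) * r₂ ^ (n - 1) * min (φ r₁) (φ r₂))
      = (2 / (n : ℝ)) * ∫ r in (0:ℝ)..R, r ^ (2 * n - 1) * φ r := by
  set ψ : ℝ → ℝ := fun r => φ (max 0 (min r R)) with hψ_def
  have hclamp : ∀ r : ℝ, max 0 (min r R) ∈ Set.Icc (0:ℝ) R := by
    intro r
    exact ⟨le_max_left _ _, max_le hR.le (min_le_right r R)⟩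
  have hψ0 : ∀ r, 0 ≤ ψ r := fun r => hφ0 _ (hclamp r)
  have hψanti : Antitone ψ := by
    intro a b hab
    exact hanti (hclamp a) (hclamp b)
      (max_le_max le_rfl (min_le_min hab le_rfl))
  have heq : ∀ r ∈ Set.Icc (0:ℝ) R, ψ r = φ r := by
    intro r hr
    simp only [hψ_def]
    rw [min_eq_left hr.2, max_eq_right hr.1]
  have hL : (∫ r₁ in (0:ℝ)..R, ∫ r₂ in (0:ℝ)..R,
        r₁ ^ (n - 1) * r₂ ^ (n - 1) * min (φ r₁) (φ r₂))
      = ∫ r₁ in (0:ℝ)..R, ∫ r₂ in (0:ℝ)..R,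
        r₁ ^ (n - 1) * r₂ ^ (n - 1) * min (ψ r₁) (ψ r₂) := by
    apply intervalIntegral.integral_congr
    intro r₁ hr₁
    rw [Set.uIcc_of_le hR.le] at hr₁
    apply intervalIntegral.integral_congr
    intro r₂ hr₂
    rw [Set.uIcc_of_le hR.le] at hr₂
    simp only [heq r₁ hr₁, heq r₂ hr₂]
  have hRi : (∫ r in (0:ℝ)..R, r ^ (2 * n - 1) * φ r)
      = ∫ r in (0:ℝ)..R, r ^ (2 * n - 1) * ψ r := by
    apply intervalIntegral.integral_congr
    intro r hr
    rw [Set.uIcc_of_le hR.le] at hr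
    simp only [heq r hr]
  rw [hL, hRi]
  exact aux_min_identity n hn R hR ψ hψ0 hψanti
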